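/- Let k be a number field that contains no CM subfield, and let p be a rational prime. Then E_p(k) = {1, -1}. -/

import Mathlib

open NumberField IsDedekindDomain IntermediateField
open Polynomial

noncomputable section

/-- Membership in `E_p(k)`: `x ≠ 0`, `ord_v x = 0` (i.e. `v`-adic valuation `1`) for every
finite place `v` not dividing `p`, and `|σ x| = 1` for every complex embedding `σ`. -/
def IsEp (k : Type*) [Field k] [NumberField k] (p : ℕ) (x : k) : Prop :=
  x ≠ 0 ∧
  (∀ v : HeightOneSpectrum (𝓞 k), (p : 𝓞 k) ∉ v.asIdeal → v.valuation k x = 1) ∧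
  (∀ σ : k →+* ℂ, ‖σ x‖ = 1)

open Classical in
/-- `ord_v(x) ∈ ℤ`, the `v`-adic order of `x ∈ k`. -/
def ordAt {k : Type*} [Field k] [NumberField k] (v : HeightOneSpectrum (𝓞 k)) (x : k) : ℤ :=
  if h : x = 0 then 0
  else - Multiplicative.toAdd (WithZero.unzero (((v.valuation k).ne_zero_iff).mpr h))

/-- The image of a prime `v` of `k` under a field automorphism `σ` of `k`. -/
def primeMap {k : Type*} [Field k] [NumberField k] (σ : k ≃ₐ[ℚ] k)
    (v : HeightOneSpectrum (𝓞 k)) : HeightOneSpectrum (𝓞 k) where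
  asIdeal := Ideal.comap (RingOfIntegers.mapRingEquiv σ.toRingEquiv).symm.toRingHom v.asIdeal
  isPrime := v.isPrime.comap _
  ne_bot := fun h => v.ne_bot (by
    have h2 := Ideal.map_comap_of_surjective
      (RingOfIntegers.mapRingEquiv σ.toRingEquiv).symm.toRingHom
      (RingOfIntegers.mapRingEquiv σ.toRingEquiv).symm.surjective v.asIdeal
    rw [h, Ideal.map_bot] at h2
    exact h2.symm)

open Classical in
/-- The inertia degree `f(v|p)` of a prime `v` of `k` over the rational prime `p`. -/
def fdeg {k : Type*} [Field k] [NumberField k] (p : ℕ) (v : HeightOneSpectrum (𝓞 k)) : ℕ :=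
  if hPp : Ideal.comap (algebraMap ℤ (𝓞 k)) v.asIdeal = Ideal.span {(p : ℤ)} then
    @Module.finrank (ℤ ⧸ Ideal.span {(p : ℤ)}) (𝓞 k ⧸ v.asIdeal) _ _ <|
      @Algebra.toModule _ _ _ _ <| RingHom.toAlgebra <|
        Ideal.Quotient.lift (Ideal.span {(p : ℤ)})
          ((Ideal.Quotient.mk v.asIdeal).comp (algebraMap ℤ (𝓞 k))) fun _ ha =>
            Ideal.Quotient.eq_zero_iff_mem.mpr <| Ideal.mem_comap.mp <| hPp.symm ▸ ha
  else 0

/-- A totally real field: every complex embedding has real image. -/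
def IsTotallyRealField (F : Type*) [Field F] : Prop :=
  ∀ (σ : F →+* ℂ) (x : F), (σ x).im = 0

/-- A CM field: a totally imaginary quadratic extension of a totally real field. -/
def IsCMField (F : Type*) [Field F] : Prop :=
  (∀ σ : F →+* ℂ, ∃ x : F, (σ x).im ≠ 0) ∧
  ∃ F₀ : Subfield F, IsTotallyRealField F₀ ∧ Module.finrank F₀ F = 2

lemma subfieldAlgebraic {k : Type*} [Field k] [CharZero k] [Algebra.IsAlgebraic ℚ k]
    (F : Subfield k) : Algebra.IsAlgebraic ℚ ↥F := by
  haveI : CharZero ↥F := F.subtype.charZero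
  constructor
  intro z
  obtain ⟨p, hp0, hp⟩ := Algebra.IsAlgebraic.isAlgebraic (R := ℚ) (F.subtype z)
  refine ⟨p, hp0, ?_⟩
  apply F.subtype.injective
  rw [map_zero, ← hp]
  show F.subtype (Polynomial.aeval z p) = Polynomial.aeval (F.subtype z) p
  rw [Polynomial.aeval_def, Polynomial.aeval_def, Polynomial.hom_eval₂,
    Subsingleton.elim (F.subtype.comp (algebraMap ℚ ↥F)) (algebraMap ℚ k)]

lemma extendHom {K k : Type*} [Field K] [Field k] [CharZero k] [Algebra.IsAlgebraic ℚ k]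
    (i : K →+* k) (f : K →+* ℂ) : ∃ g : k →+* ℂ, ∀ z : K, g (i z) = f z := by
  letI : Algebra K k := i.toAlgebra
  haveI : CharZero K := i.charZero
  letI : Algebra K ℂ := f.toAlgebra
  haveI : IsScalarTower ℚ K k := IsScalarTower.of_algebraMap_eq (fun r => by
    rw [Subsingleton.elim (algebraMap ℚ k) ((algebraMap K k).comp (algebraMap ℚ K))]; rfl)
  haveI : Algebra.IsAlgebraic K k := by
    constructor
    intro z
    obtain ⟨p, hp0, hp⟩ := (Algebra.IsAlgebraic.isAlgebraic (R := ℚ) z)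
    refine ⟨p.map (algebraMap ℚ K), ?_, ?_⟩
    · exact fun h => hp0 ((Polynomial.map_eq_zero_iff (algebraMap ℚ K).injective).mp h)
    · rwa [Polynomial.aeval_map_algebraMap]
  obtain g := IsAlgClosed.lift (R := K) (S := k) (M := ℂ)
  exact ⟨g.toRingHom, fun z => g.commutes z⟩

lemma mem_RS {z : ℂ} : z ∈ Complex.ofRealHom.fieldRange ↔ z.im = 0 := by
  constructor
  · rintro ⟨r, rfl⟩; simp
  · intro h; exact ⟨z.re, Complex.ext (by simp) (by simp [h])⟩

lemma finrank_two {L : Type*} [Field L] (F₀ : Subfield L) (X : L) (hX0 : X ≠ 0)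
    (hXF₀ : X ∉ F₀) (hA : X + X⁻¹ ∈ F₀)
    (htop : F₀⟮X⟯ = (⊤ : IntermediateField ↥F₀ L)) :
    Module.finrank ↥F₀ L = 2 := by
  set A' : ↥F₀ := ⟨X + X⁻¹, hA⟩ with hA'
  set q : Polynomial ↥F₀ := Polynomial.X ^ 2 - C A' * Polynomial.X + 1 with hq
  have hqform : q = Polynomial.X ^ 2 - (C A' * Polynomial.X - 1) := by
    rw [hq]; exact sub_add _ _ _
  have hdlt : (C A' * Polynomial.X - 1 : Polynomial ↥F₀).degree < 2 := by
    apply lt_of_le_of_lt (Polynomial.degree_sub_le _ _)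
    rw [Polynomial.degree_one]
    refine max_lt (lt_of_le_of_lt (Polynomial.degree_C_mul_X_le A') ?_) ?_ <;> norm_num
  have hqmonic : q.Monic := by
    rw [hqform]
    exact monic_X_pow_sub hdlt
  have hmapA : algebraMap ↥F₀ L A' = X + X⁻¹ := rfl
  have haev : Polynomial.aeval X q = 0 := by
    rw [hq]
    simp only [map_add, map_sub, map_mul, map_one, map_pow, aeval_X, aeval_C, hmapA]
    field_simp
    ring
  have hint : IsIntegral ↥F₀ X := ⟨q, hqmonic, haev⟩
  have hdvd : minpoly ↥F₀ X ∣ q := minpoly.dvd _ _ haev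
  have hdegq : q.natDegree = 2 := by
    have : q.degree = 2 := by
      rw [hqform, Polynomial.degree_sub_eq_left_of_degree_lt
        (by rwa [Polynomial.degree_X_pow])]
      exact Polynomial.degree_X_pow 2
    exact Polynomial.natDegree_eq_of_degree_eq_some this
  have hle2 : (minpoly ↥F₀ X).natDegree ≤ 2 := by
    rw [← hdegq]
    exact Polynomial.natDegree_le_of_dvd hdvd hqmonic.ne_zero
  have hpos : 0 < (minpoly ↥F₀ X).natDegree := minpoly.natDegree_pos hint
  have hne1 : (minpoly ↥F₀ X).natDegree ≠ 1 := by
    intro h1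
    have hdeg : (minpoly ↥F₀ X).degree = 1 := by
      rw [Polynomial.degree_eq_natDegree (minpoly.ne_zero hint), h1]; rfl
    obtain ⟨c, hc⟩ := (minpoly.degree_eq_one_iff).mp hdeg
    apply hXF₀
    rw [← hc]
    exact c.2
  have hdeg2 : (minpoly ↥F₀ X).natDegree = 2 := by omega
  have hfr := IntermediateField.adjoin.finrank hint
  rw [hdeg2] at hfr
  rw [← IntermediateField.finrank_top' (F := ↥F₀) (E := L), ← htop, hfr]

lemma key {k : Type*} [Field k] [NumberField k] (x : k) (hx0 : x ≠ 0)
    (habs : ∀ σ : k →+* ℂ, ‖σ x‖ = 1) (hx1 : x ≠ 1) (hxm1 : x ≠ -1) :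
    _root_.IsCMField ↥(Subfield.closure {x}) := by
  have claimI : ∀ σ : k →+* ℂ, (σ x).im ≠ 0 := by
    intro σ h
    have h1 := habs σ
    have hz : σ x = ((σ x).re : ℂ) := (Complex.ext (by simp) (by simp [h])).symm
    rw [hz, Complex.norm_real, Real.norm_eq_abs] at h1
    rcases abs_eq (by norm_num : (0:ℝ) ≤ 1) |>.mp h1 with h2 | h2
    · exact hx1 (σ.injective (by rw [hz, h2]; simp))
    · exact hxm1 (σ.injective (by rw [hz, h2]; simp))
  have claimR : ∀ σ : k →+* ℂ, (σ (x + x⁻¹)).im = 0 := by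
    intro σ
    have h1 : Complex.normSq (σ x) = 1 := by
      rw [← Complex.sq_norm, habs σ]; norm_num
    rw [map_add, map_inv₀, Complex.add_im, Complex.inv_im, h1]
    ring
  set F : Subfield k := Subfield.closure {x} with hF
  haveI : CharZero ↥F := F.subtype.charZero
  haveI : Algebra.IsAlgebraic ℚ ↥F := subfieldAlgebraic F
  have hxF : x ∈ F := Subfield.subset_closure rfl
  have hαF : x + x⁻¹ ∈ F := F.add_mem hxF (F.inv_mem hxF)
  set X : ↥F := ⟨x, hxF⟩ with hX
  set A : ↥F := ⟨x + x⁻¹, hαF⟩ with hA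
  set F₀ : Subfield ↥F := Subfield.closure {A} with hF₀
  haveI : CharZero ↥F₀ := F₀.subtype.charZero
  haveI : Algebra.IsAlgebraic ℚ ↥F₀ := subfieldAlgebraic F₀
  have hAF₀ : A ∈ F₀ := Subfield.subset_closure rfl
  have hreal : ∀ g : k →+* ℂ, ∀ y ∈ F₀, (g ((y : ↥F) : k)).im = 0 := by
    intro g y hy
    have hle : F₀ ≤ Subfield.comap (g.comp F.subtype) Complex.ofRealHom.fieldRange := by
      rw [hF₀]
      apply Subfield.closure_le.mpr
      intro a ha
      rcases ha with rfl
      exact mem_RS.mpr (claimR g)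
    exact mem_RS.mp (hle hy)
  constructor
  · intro σ'
    obtain ⟨g, hg⟩ := extendHom F.subtype σ'
    refine ⟨X, ?_⟩
    rw [show σ' X = g x from (hg X).symm]
    exact claimI g
  · refine ⟨F₀, ?_, ?_⟩
    · intro τ y
      obtain ⟨g', hg'⟩ := extendHom F₀.subtype τ
      obtain ⟨g, hg⟩ := extendHom F.subtype g'
      have heq : τ y = g ((y : ↥F) : k) := by
        rw [← hg' y, ← hg (F₀.subtype y)]; rfl
      rw [heq]
      exact hreal g y y.2
    · obtain ⟨σ0, _⟩ := extendHom (algebraMap ℚ k) (algebraMap ℚ ℂ)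
      have hXF₀ : X ∉ F₀ := by
        intro hmem
        exact claimI σ0 (hreal σ0 X hmem)
      have hX0 : X ≠ 0 := fun h => hx0 (congrArg Subtype.val h)
      have hAval : X + X⁻¹ ∈ F₀ := by
        have : A = X + X⁻¹ := by ext; simp [hA, hX]
        rwa [← this]
      apply finrank_two F₀ X hX0 hXF₀ hAval
      rw [eq_top_iff]
      intro z _
      have hsub : F ≤ Subfield.map F.subtype F₀⟮X⟯.toSubfield := by
        conv_lhs => rw [hF]
        apply Subfield.closure_le.mpr
        intro a ha
        rcases ha with rfl
        exact ⟨X, mem_adjoin_simple_self ↥F₀ X, rfl⟩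
      obtain ⟨w, hw, hwz⟩ := hsub z.2
      have hwz' : w = z := Subtype.ext hwz
      rwa [← hwz']

/-- If the number field `k` contains no CM subfield, then
`E_p(k) = {1, -1}`. -/
theorem statement2 (k : Type*) [Field k] [NumberField k] (p : ℕ) (hp : p.Prime)
    (hnoCM : ∀ F : Subfield k, ¬ _root_.IsCMField ↥F) (x : k) :
    IsEp k p x ↔ (x = 1 ∨ x = -1) := by
  constructor
  · rintro ⟨hx0, -, habs⟩
    by_contra h
    push_neg at h
    exact hnoCM (Subfield.closure {x}) (key x hx0 habs h.1 h.2)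
  · rintro (rfl | rfl)
    · exact ⟨one_ne_zero, fun v _ => map_one _, fun σ => by simp⟩
    · refine ⟨by norm_num, fun v _ => ?_, fun σ => by simp⟩
      rw [Valuation.map_neg, map_one]


end
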